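/- arXiv:0808.3392 — 4 statements merged into one kernel-verified Lean document; each statement's English description precedes it below -/
import Mathlib

section
/- Let H be any looped graph and let G be obtained from H by adjoining two new vertices v and w in an Ω.2 move: v carries a loop, w does not, every vertex of H that is adjacent to one of v, w is also adjacent to the other, and v and w may or may not be adjacent. Then for every nonzero real number A, ⟨G⟩(A) = ⟨H⟩(A); consequently the graph Jones polynomials of G and H agree. -/
open Matrix BigOperators

/-- The graph bracket polynomial of a looped graph specified by its Boolean
adjacency matrix `M` over `GF(2)`:
`[G](A,B,d) = ∑_Δ A^{ν(Δ)} B^{ρ(Δ)} d^{ν(M+Δ)}`, the sum over all diagonal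
matrices `Δ` over `GF(2)` (encoded by their diagonal functions `f`). -/
noncomputable def gBracket {V : Type*} [Fintype V] [DecidableEq V] {K : Type*} [CommRing K]
    (M : Matrix V V (ZMod 2)) (A B d : K) : K :=
  ∑ f : V → ZMod 2,
    A ^ (Fintype.card V - (Matrix.diagonal f).rank)
      * B ^ (Matrix.diagonal f).rank
      * d ^ (Fintype.card V - (M + Matrix.diagonal f).rank)

/-- The reduced graph bracket `⟨G⟩(A) = [G](A, A⁻¹, -A² - A⁻²)`. -/
noncomputable def gBracketR {V : Type*} [Fintype V] [DecidableEq V]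
    (M : Matrix V V (ZMod 2)) (A : ℝ) : ℝ :=
  gBracket M A A⁻¹ (-A ^ 2 - A⁻¹ ^ 2)

/-- The graph Jones polynomial `V_G(t) = (-1)^n · t^{(3n-6ℓ)/4} · ⟨G⟩(t^{-1/4})`,
where `n` is the number of vertices and `ℓ` the number of loops of `G`. -/
noncomputable def jonesV {V : Type*} [Fintype V] [DecidableEq V]
    (M : Matrix V V (ZMod 2)) (t : ℝ) : ℝ :=
  (-1 : ℝ) ^ (Fintype.card V)
    * t ^ ((3 * (Fintype.card V : ℝ) - 6 * (Fintype.card {i : V // M i i = 1} : ℝ)) / 4)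
    * gBracketR M (t ^ (-(1/4) : ℝ))


section RankTools
variable {K : Type*} [Field K] {m n : Type*} [Fintype m] [Fintype n] [DecidableEq m] [DecidableEq n]

private def subProdEquiv {V V' : Type*} [AddCommGroup V] [AddCommGroup V'] [Module K V] [Module K V']
    (p : Submodule K V) (q : Submodule K V') : (p.prod q) ≃ₗ[K] p × q where
  toFun x := (⟨x.1.1, x.2.1⟩, ⟨x.1.2, x.2.2⟩)
  invFun y := ⟨(y.1.1, y.2.1), ⟨y.1.2, y.2.2⟩⟩
  map_add' _ _ := rfl
  map_smul' _ _ := rfl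
  left_inv _ := rfl
  right_inv _ := rfl

private lemma rank_fromBlocks_zero (A : Matrix m m K) (D : Matrix n n K) :
    (fromBlocks A 0 0 D).rank = A.rank + D.rank := by
  classical
  set φ := LinearEquiv.sumArrowLequivProdArrow m n K K with hφ
  have hrange : LinearMap.range (fromBlocks A 0 0 D).mulVecLin
      = Submodule.comap (φ.toLinearMap)
          ((LinearMap.range A.mulVecLin).prod (LinearMap.range D.mulVecLin)) := by
    ext x
    simp only [LinearMap.mem_range, Submodule.mem_comap, Submodule.mem_prod, mulVecLin_apply]
    constructor
    · rintro ⟨y, rfl⟩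
      constructor
      · exact ⟨y ∘ Sum.inl, by ext a; simp [φ, fromBlocks_mulVec,
          LinearEquiv.sumArrowLequivProdArrow]⟩
      · exact ⟨y ∘ Sum.inr, by ext a; simp [φ, fromBlocks_mulVec,
          LinearEquiv.sumArrowLequivProdArrow]⟩
    · rintro ⟨⟨y₁, h₁⟩, ⟨y₂, h₂⟩⟩
      refine ⟨Sum.elim y₁ y₂, ?_⟩
      funext z
      rcases z with a | b
      · have := congrFun h₁ a
        simpa [φ, fromBlocks_mulVec, LinearEquiv.sumArrowLequivProdArrow] using this
      · have := congrFun h₂ b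
        simpa [φ, fromBlocks_mulVec, LinearEquiv.sumArrowLequivProdArrow] using this
  rw [Matrix.rank, hrange, Submodule.comap_equiv_eq_map_symm]
  rw [LinearEquiv.finrank_map_eq]
  rw [LinearEquiv.finrank_eq (subProdEquiv _ _), Module.finrank_prod]
  rfl

private lemma rank_schur (X : Matrix m m K) (B : Matrix m n K) (C : Matrix n m K) (D : Matrix n n K)
    (hD : IsUnit D.det) :
    (fromBlocks X B C D).rank = (X - B * D⁻¹ * C).rank + Fintype.card n := by
  have h1 : D⁻¹ * D = 1 := nonsing_inv_mul D hD
  have h2 : D * D⁻¹ = 1 := mul_nonsing_inv D hD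
  have key : fromBlocks X B C D =
      (fromBlocks 1 (B * D⁻¹) 0 1) * (fromBlocks (X - B * D⁻¹ * C) 0 0 D)
        * (fromBlocks 1 0 (D⁻¹ * C) 1) := by
    rw [fromBlocks_multiply, fromBlocks_multiply]
    simp [Matrix.mul_assoc, h1, h2]
    rw [← Matrix.mul_assoc, h2, Matrix.one_mul]
  rw [key, Matrix.rank_mul_eq_left_of_isUnit_det, Matrix.rank_mul_eq_right_of_isUnit_det,
    rank_fromBlocks_zero, Matrix.rank_of_isUnit D ((isUnit_iff_isUnit_det D).mpr hD)]
  · simp [Matrix.det_fromBlocks_zero₂₁]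
  · simp [Matrix.det_fromBlocks_zero₁₂]
end RankTools

namespace Omega2
variable {W : Type*} [Fintype W] [DecidableEq W]

def Cc (c : W → ZMod 2) : Matrix W Bool (ZMod 2) := of fun x _ => c x
def Cr (c : W → ZMod 2) : Matrix Bool W (ZMod 2) := of fun _ x => c x
def CcT (c : W → ZMod 2) : Matrix W Bool (ZMod 2) := of fun x j => if j then c x else 0
def CrT (c : W → ZMod 2) : Matrix Bool W (ZMod 2) := of fun i x => if i then c x else 0
def CcF (c : W → ZMod 2) : Matrix W Bool (ZMod 2) := of fun x j => if j then 0 else c x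
def CrF (c : W → ZMod 2) : Matrix Bool W (ZMod 2) := of fun i x => if i then 0 else c x
def colc (c : W → ZMod 2) : Matrix W Unit (ZMod 2) := of fun x _ => c x
def rowc (c : W → ZMod 2) : Matrix Unit W (ZMod 2) := of fun _ x => c x
def cst (α : ZMod 2) : Matrix Unit Unit (ZMod 2) := of fun _ _ => α
def Bm (p q r s : ZMod 2) : Matrix Bool Bool (ZMod 2) :=
  of fun i j => if i then (if j then p else q) else (if j then r else s)
def Dm (α β γ : ZMod 2) : Matrix Bool Bool (ZMod 2) := Bm α β β γ

lemma two_eq_zero : (2 : ZMod 2) = 0 := by decide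

lemma sub_eq_add' {a b : Type*} (X Y : Matrix a b (ZMod 2)) : X - Y = X + Y := by
  ext i j; exact CharTwo.sub_eq_add _ _

lemma add_self' {a b : Type*} (X : Matrix a b (ZMod 2)) : X + X = 0 := by
  ext i j
  show X i j + X i j = 0
  exact CharTwo.add_self_eq_zero (X i j)

/-- the reindexing equivalence putting `true` into the inner block -/
def σT : W ⊕ Bool ≃ (W ⊕ Unit) ⊕ Unit where
  toFun := fun z => match z with
    | Sum.inl x => Sum.inl (Sum.inl x)
    | Sum.inr true => Sum.inl (Sum.inr ())
    | Sum.inr false => Sum.inr ()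
  invFun := fun z => match z with
    | Sum.inl (Sum.inl x) => Sum.inl x
    | Sum.inl (Sum.inr _) => Sum.inr true
    | Sum.inr _ => Sum.inr false
  left_inv := by rintro (x | b) <;> first | rfl | (cases b <;> rfl)
  right_inv := by rintro ((x | u) | u) <;> rfl

/-- the reindexing equivalence putting `false` into the inner block -/
def σF : W ⊕ Bool ≃ (W ⊕ Unit) ⊕ Unit where
  toFun := fun z => match z with
    | Sum.inl x => Sum.inl (Sum.inl x)
    | Sum.inr false => Sum.inl (Sum.inr ())
    | Sum.inr true => Sum.inr ()
  invFun := fun z => match z with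
    | Sum.inl (Sum.inl x) => Sum.inl x
    | Sum.inl (Sum.inr _) => Sum.inr false
    | Sum.inr _ => Sum.inr true
  left_inv := by rintro (x | b) <;> first | rfl | (cases b <;> rfl)
  right_inv := by rintro ((x | u) | u) <;> rfl

lemma reindexT (N : Matrix W W (ZMod 2)) (u : W → ZMod 2) (α γ : ZMod 2) :
    (fromBlocks N (CcT u) (CrT u) (Bm α 0 0 γ)).rank
      = (fromBlocks N (colc u) (rowc u) (cst α)).rank + (cst γ).rank := by
  have h : fromBlocks N (CcT u) (CrT u) (Bm α 0 0 γ)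
      = (fromBlocks (fromBlocks N (colc u) (rowc u) (cst α)) 0 0 (cst γ)).submatrix σT σT := by
    ext i j
    rcases i with x | bi
    · rcases j with y | bj
      · rfl
      · cases bj <;> rfl
    · rcases j with y | bj
      · cases bi <;> rfl
      · cases bi <;> cases bj <;> rfl
  rw [h, Matrix.rank_submatrix, rank_fromBlocks_zero]

end Omega2

namespace Omega2
variable {W : Type*} [Fintype W] [DecidableEq W]

lemma reindexF (N : Matrix W W (ZMod 2)) (u : W → ZMod 2) (α γ : ZMod 2) :
    (fromBlocks N (CcF u) (CrF u) (Bm α 0 0 γ)).rank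
      = (fromBlocks N (colc u) (rowc u) (cst γ)).rank + (cst α).rank := by
  have h : fromBlocks N (CcF u) (CrF u) (Bm α 0 0 γ)
      = (fromBlocks (fromBlocks N (colc u) (rowc u) (cst γ)) 0 0 (cst α)).submatrix σF σF := by
    ext i j
    rcases i with x | bi
    · rcases j with y | bj
      · rfl
      · cases bj <;> rfl
    · rcases j with y | bj
      · cases bi <;> rfl
      · cases bi <;> cases bj <;> rfl
  rw [h, Matrix.rank_submatrix, rank_fromBlocks_zero]

lemma cst_one : cst 1 = (1 : Matrix Unit Unit (ZMod 2)) := by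
  ext i j; simp [cst, Matrix.one_apply]

lemma cst_zero : cst 0 = (0 : Matrix Unit Unit (ZMod 2)) := by
  ext i j; simp [cst]

lemma rank_cst_one : (cst 1).rank = 1 := by
  rw [cst_one, Matrix.rank_one]; simp

lemma rank_cst_zero : (cst 0).rank = 0 := by rw [cst_zero, Matrix.rank_zero]

lemma colc_mul_rowc (u : W → ZMod 2) : colc u * rowc u = vecMulVec u u := by
  ext x y; simp [colc, rowc, mul_apply, vecMulVec]

lemma rank_corner1 (N : Matrix W W (ZMod 2)) (u : W → ZMod 2) :
    (fromBlocks N (colc u) (rowc u) (cst 1)).rank = (N + vecMulVec u u).rank + 1 := by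
  have hDE : cst 1 * cst 1 = (1 : Matrix Unit Unit (ZMod 2)) := by
    rw [cst_one, Matrix.one_mul]
  have hdet : IsUnit (cst (1 : ZMod 2)).det := Matrix.isUnit_det_of_right_inverse hDE
  rw [rank_schur _ _ _ _ hdet, Matrix.inv_eq_right_inv hDE]
  have h : colc u * cst 1 * rowc u = vecMulVec u u := by
    rw [cst_one, Matrix.mul_one, colc_mul_rowc]
  rw [h, sub_eq_add']
  simp

lemma rank_q_shift (N : Matrix W W (ZMod 2)) (u : W → ZMod 2) :
    (fromBlocks (N + vecMulVec u u) (colc u) (rowc u) (cst 0)).rank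
      = (fromBlocks N (colc u) (rowc u) (cst 0)).rank := by
  have key : (fromBlocks 1 (colc u) 0 1)
      * (fromBlocks (N + vecMulVec u u) (colc u) (rowc u) (cst 0))
      = fromBlocks N (colc u) (rowc u) (cst 0) := by
    rw [fromBlocks_multiply]
    have h1 : colc u * cst 0 = 0 := by rw [cst_zero, Matrix.mul_zero]
    have h2 : N + vecMulVec u u + colc u * rowc u = N := by
      rw [colc_mul_rowc, add_assoc]
      rw [add_self', add_zero]
    simp [h1, h2]
  have hdet : IsUnit (fromBlocks (1 : Matrix W W (ZMod 2)) (colc u) 0 1).det := by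
    rw [Matrix.det_fromBlocks_zero₂₁]; simp
  rw [← key, Matrix.rank_mul_eq_right_of_isUnit_det _ _ hdet]

end Omega2

namespace Omega2
variable {W : Type*} [Fintype W] [DecidableEq W]

-- small product facts
lemma two_eq_zero' : (2 : ZMod 2) = 0 := by decide

lemma CcE_T (c : W → ZMod 2) : Cc c * Bm 1 1 0 1 = CcT c := by
  ext x j
  cases j <;> simp [Cc, CcT, Bm, mul_apply, Fintype.sum_bool, CharTwo.add_self_eq_zero,
    two_eq_zero']

lemma ECr_T (c : W → ZMod 2) : Bm 1 0 1 1 * Cr c = CrT c := by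
  ext i x
  cases i <;> simp [Cr, CrT, Bm, mul_apply, Fintype.sum_bool, CharTwo.add_self_eq_zero,
    two_eq_zero']

lemma CcT_mul_Cr (c : W → ZMod 2) : CcT c * Cr c = vecMulVec c c := by
  ext x y; simp [CcT, Cr, mul_apply, Fintype.sum_bool, vecMulVec]

lemma CcF_mul_Cr (c : W → ZMod 2) : CcF c * Cr c = vecMulVec c c := by
  ext x y; simp [CcF, Cr, mul_apply, Fintype.sum_bool, vecMulVec]

lemma CcT_mul_D100 (c : W → ZMod 2) : CcT c * Dm 1 0 0 = CcT c := by
  ext x j; cases j <;> simp [CcT, Dm, Bm, mul_apply, Fintype.sum_bool]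

lemma CcF_mul_D001 (c : W → ZMod 2) : CcF c * Dm 0 0 1 = CcF c := by
  ext x j; cases j <;> simp [CcF, Dm, Bm, mul_apply, Fintype.sum_bool]

lemma Cc_add_CcT (c : W → ZMod 2) : Cc c + CcT c = CcF c := by
  ext x j; cases j <;> simp [Cc, CcT, CcF, CharTwo.add_self_eq_zero]

lemma Cc_add_CcF (c : W → ZMod 2) : Cc c + CcF c = CcT c := by
  ext x j; cases j <;> simp [Cc, CcT, CcF, CharTwo.add_self_eq_zero]

lemma CcF_mul_CrT (c : W → ZMod 2) : CcF c * CrT c = 0 := by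
  ext x y; simp [CcF, CrT, mul_apply, Fintype.sum_bool]

lemma CcT_mul_CrF (c : W → ZMod 2) : CcT c * CrF c = 0 := by
  ext x y; simp [CcT, CrF, mul_apply, Fintype.sum_bool]

lemma D100_mul_CrT (c : W → ZMod 2) : Dm 1 0 0 * CrT c = CrT c := by
  ext i x; cases i <;> simp [CrT, Dm, Bm, mul_apply, Fintype.sum_bool]

lemma D001_mul_CrF (c : W → ZMod 2) : Dm 0 0 1 * CrF c = CrF c := by
  ext i x; cases i <;> simp [CrF, Dm, Bm, mul_apply, Fintype.sum_bool]

lemma Cr_add_CrT (c : W → ZMod 2) : Cr c + CrT c = CrF c := by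
  ext i x; cases i <;> simp [Cr, CrT, CrF, CharTwo.add_self_eq_zero]

lemma Cr_add_CrF (c : W → ZMod 2) : Cr c + CrF c = CrT c := by
  ext i x; cases i <;> simp [Cr, CrT, CrF, CharTwo.add_self_eq_zero]

lemma isUnit_blockdiag (E E' : Matrix Bool Bool (ZMod 2)) (h : E * E' = 1) :
    IsUnit ((fromBlocks (1 : Matrix W W (ZMod 2)) 0 0 E)).det :=
  Matrix.isUnit_det_of_right_inverse (B := fromBlocks 1 0 0 E')
    (by rw [fromBlocks_multiply]; simp [h, fromBlocks_one])

lemma isUnit_upper (B : Matrix W Bool (ZMod 2)) :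
    IsUnit (fromBlocks (1 : Matrix W W (ZMod 2)) B 0 1).det :=
  Matrix.isUnit_det_of_right_inverse (B := fromBlocks 1 B 0 1)
    (by rw [fromBlocks_multiply]; simp [add_self', fromBlocks_one])

lemma isUnit_lower (C : Matrix Bool W (ZMod 2)) :
    IsUnit (fromBlocks (1 : Matrix W W (ZMod 2)) 0 C 1).det :=
  Matrix.isUnit_det_of_right_inverse (B := fromBlocks 1 0 C 1)
    (by rw [fromBlocks_multiply]; simp [add_self', fromBlocks_one])

end Omega2

namespace Omega2
variable {W : Type*} [Fintype W] [DecidableEq W]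

/-- abbreviation for the augmented rank -/
noncomputable def qRank (N : Matrix W W (ZMod 2)) (c : W → ZMod 2) : ℕ :=
  (fromBlocks N (colc c) (rowc c) (cst 0)).rank

-- Schur (invertible 2x2 corner) cases
lemma caseD110 (N : Matrix W W (ZMod 2)) (c : W → ZMod 2) :
    (fromBlocks N (Cc c) (Cr c) (Dm 1 1 0)).rank = (N + vecMulVec c c).rank + 2 := by
  have hDE : Dm 1 1 0 * Bm 0 1 1 1 = 1 := by decide
  have hdet : IsUnit (Dm 1 1 0).det := Matrix.isUnit_det_of_right_inverse hDE
  rw [rank_schur _ _ _ _ hdet, Matrix.inv_eq_right_inv hDE]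
  have h : Cc c * Bm 0 1 1 1 * Cr c = vecMulVec c c := by
    ext x y
    simp [Cc, Cr, Bm, mul_apply, Fintype.sum_bool, vecMulVec]
    ring_nf
    simp [two_eq_zero']
  rw [h, sub_eq_add']
  simp

lemma caseD011 (N : Matrix W W (ZMod 2)) (c : W → ZMod 2) :
    (fromBlocks N (Cc c) (Cr c) (Dm 0 1 1)).rank = (N + vecMulVec c c).rank + 2 := by
  have hDE : Dm 0 1 1 * Bm 1 1 1 0 = 1 := by decide
  have hdet : IsUnit (Dm 0 1 1).det := Matrix.isUnit_det_of_right_inverse hDE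
  rw [rank_schur _ _ _ _ hdet, Matrix.inv_eq_right_inv hDE]
  have h : Cc c * Bm 1 1 1 0 * Cr c = vecMulVec c c := by
    ext x y
    simp [Cc, Cr, Bm, mul_apply, Fintype.sum_bool, vecMulVec]
    ring_nf
    simp [two_eq_zero']
  rw [h, sub_eq_add']
  simp

lemma caseD010 (N : Matrix W W (ZMod 2)) (c : W → ZMod 2) :
    (fromBlocks N (Cc c) (Cr c) (Dm 0 1 0)).rank = N.rank + 2 := by
  have hDE : Dm 0 1 0 * Bm 0 1 1 0 = 1 := by decide
  have hdet : IsUnit (Dm 0 1 0).det := Matrix.isUnit_det_of_right_inverse hDE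
  rw [rank_schur _ _ _ _ hdet, Matrix.inv_eq_right_inv hDE]
  have h : Cc c * Bm 0 1 1 0 * Cr c = 0 := by
    ext x y
    simp [Cc, Cr, Bm, mul_apply, Fintype.sum_bool]
    ring_nf
    simp [two_eq_zero']
  rw [h, sub_zero]
  simp

lemma caseD101 (N : Matrix W W (ZMod 2)) (c : W → ZMod 2) :
    (fromBlocks N (Cc c) (Cr c) (Dm 1 0 1)).rank = N.rank + 2 := by
  have hDE : Dm 1 0 1 * Bm 1 0 0 1 = 1 := by decide
  have hdet : IsUnit (Dm 1 0 1).det := Matrix.isUnit_det_of_right_inverse hDE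
  rw [rank_schur _ _ _ _ hdet, Matrix.inv_eq_right_inv hDE]
  have h : Cc c * Bm 1 0 0 1 * Cr c = 0 := by
    ext x y
    simp [Cc, Cr, Bm, mul_apply, Fintype.sum_bool]
    ring_nf
    simp [two_eq_zero']
  rw [h, sub_zero]
  simp

-- singular corner cases
lemma caseD111 (N : Matrix W W (ZMod 2)) (c : W → ZMod 2) :
    (fromBlocks N (Cc c) (Cr c) (Dm 1 1 1)).rank = (N + vecMulVec c c).rank + 1 := by
  have hE1 : Bm 1 0 1 1 * Dm 1 1 1 * Bm 1 1 0 1 = Bm 1 0 0 0 := by decide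
  have key : (fromBlocks 1 0 0 (Bm 1 0 1 1)) * (fromBlocks N (Cc c) (Cr c) (Dm 1 1 1))
      * (fromBlocks 1 0 0 (Bm 1 1 0 1)) = fromBlocks N (CcT c) (CrT c) (Bm 1 0 0 0) := by
    rw [fromBlocks_multiply, fromBlocks_multiply]
    simp [CcE_T, ECr_T, Matrix.mul_assoc]
    rw [← Matrix.mul_assoc, hE1]
  have hP : IsUnit ((fromBlocks (1 : Matrix W W (ZMod 2)) 0 0 (Bm 1 0 1 1))).det :=
    isUnit_blockdiag _ (Bm 1 0 1 1) (by decide)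
  have hQ : IsUnit ((fromBlocks (1 : Matrix W W (ZMod 2)) 0 0 (Bm 1 1 0 1))).det :=
    isUnit_blockdiag _ (Bm 1 1 0 1) (by decide)
  rw [← Matrix.rank_mul_eq_right_of_isUnit_det _ _ hP,
    ← Matrix.rank_mul_eq_left_of_isUnit_det _ _ hQ, key, reindexT, rank_cst_zero,
    rank_corner1]
lemma caseD100 (N : Matrix W W (ZMod 2)) (c : W → ZMod 2) :
    (fromBlocks N (Cc c) (Cr c) (Dm 1 0 0)).rank = qRank N c + 1 := by
  have key : (fromBlocks 1 (CcT c) 0 1) * (fromBlocks N (Cc c) (Cr c) (Dm 1 0 0))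
      * (fromBlocks 1 0 (CrT c) 1)
      = fromBlocks (N + vecMulVec c c) (CcF c) (CrF c) (Bm 1 0 0 0) := by
    rw [fromBlocks_multiply, fromBlocks_multiply]
    simp [CcT_mul_Cr, CcT_mul_D100, Cc_add_CcT, CcF_mul_CrT, D100_mul_CrT, Cr_add_CrT,
      add_assoc]
    rfl
  rw [← Matrix.rank_mul_eq_right_of_isUnit_det _ _ (isUnit_upper (CcT c)),
    ← Matrix.rank_mul_eq_left_of_isUnit_det _ _ (isUnit_lower (CrT c)), key, reindexF,
    rank_cst_one, rank_q_shift]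
  rfl

lemma caseD001 (N : Matrix W W (ZMod 2)) (c : W → ZMod 2) :
    (fromBlocks N (Cc c) (Cr c) (Dm 0 0 1)).rank = qRank N c + 1 := by
  have key : (fromBlocks 1 (CcF c) 0 1) * (fromBlocks N (Cc c) (Cr c) (Dm 0 0 1))
      * (fromBlocks 1 0 (CrF c) 1)
      = fromBlocks (N + vecMulVec c c) (CcT c) (CrT c) (Bm 0 0 0 1) := by
    rw [fromBlocks_multiply, fromBlocks_multiply]
    simp [CcF_mul_Cr, CcF_mul_D001, Cc_add_CcF, CcT_mul_CrF, D001_mul_CrF, Cr_add_CrF,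
      add_assoc]
    rfl
  rw [← Matrix.rank_mul_eq_right_of_isUnit_det _ _ (isUnit_upper (CcF c)),
    ← Matrix.rank_mul_eq_left_of_isUnit_det _ _ (isUnit_lower (CrF c)), key, reindexT,
    rank_cst_one, rank_q_shift]
  rfl

lemma caseD000 (N : Matrix W W (ZMod 2)) (c : W → ZMod 2) :
    (fromBlocks N (Cc c) (Cr c) (Dm 0 0 0)).rank = qRank N c := by
  have hE1 : Bm 1 0 1 1 * Dm 0 0 0 * Bm 1 1 0 1 = Bm 0 0 0 0 := by decide
  have key : (fromBlocks 1 0 0 (Bm 1 0 1 1)) * (fromBlocks N (Cc c) (Cr c) (Dm 0 0 0))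
      * (fromBlocks 1 0 0 (Bm 1 1 0 1)) = fromBlocks N (CcT c) (CrT c) (Bm 0 0 0 0) := by
    rw [fromBlocks_multiply, fromBlocks_multiply]
    simp [CcE_T, ECr_T, Matrix.mul_assoc]
    rw [← Matrix.mul_assoc, hE1]
  have hP : IsUnit ((fromBlocks (1 : Matrix W W (ZMod 2)) 0 0 (Bm 1 0 1 1))).det :=
    isUnit_blockdiag _ (Bm 1 0 1 1) (by decide)
  have hQ : IsUnit ((fromBlocks (1 : Matrix W W (ZMod 2)) 0 0 (Bm 1 1 0 1))).det :=
    isUnit_blockdiag _ (Bm 1 1 0 1) (by decide)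
  rw [← Matrix.rank_mul_eq_right_of_isUnit_det _ _ hP,
    ← Matrix.rank_mul_eq_left_of_isUnit_det _ _ hQ, key, reindexT, rank_cst_zero, add_zero]
  rfl

end Omega2


lemma Omega2.sum4 (A : ℝ) (hA : A ≠ 0) (u v m t : ℕ) :
    A ^ (u + 2) * A⁻¹ ^ v * (-A ^ 2 - A⁻¹ ^ 2) ^ m
      + (A ^ (u + 1) * A⁻¹ ^ (v + 1) * (-A ^ 2 - A⁻¹ ^ 2) ^ (m + 1)
      + (A ^ (u + 1) * A⁻¹ ^ (v + 1) * (-A ^ 2 - A⁻¹ ^ 2) ^ t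
      + A ^ u * A⁻¹ ^ (v + 2) * (-A ^ 2 - A⁻¹ ^ 2) ^ m))
      = A ^ u * A⁻¹ ^ v * (-A ^ 2 - A⁻¹ ^ 2) ^ t := by
  simp only [pow_add, pow_succ, pow_one]
  field_simp
  ring

lemma Omega2.sum4' (A : ℝ) (hA : A ≠ 0) (u v m t : ℕ) :
    A ^ (u + 2) * A⁻¹ ^ v * (-A ^ 2 - A⁻¹ ^ 2) ^ m
      + (A ^ (u + 1) * A⁻¹ ^ (v + 1) * (-A ^ 2 - A⁻¹ ^ 2) ^ t
      + (A ^ (u + 1) * A⁻¹ ^ (v + 1) * (-A ^ 2 - A⁻¹ ^ 2) ^ (m + 1)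
      + A ^ u * A⁻¹ ^ (v + 2) * (-A ^ 2 - A⁻¹ ^ 2) ^ m))
      = A ^ u * A⁻¹ ^ v * (-A ^ 2 - A⁻¹ ^ 2) ^ t := by
  rw [← Omega2.sum4 A hA u v m t]; ring

lemma Omega2.sum_sum_elim {W : Type*} [Fintype W] [DecidableEq W] {α : Type*} [AddCommMonoid α]
    (F : (W ⊕ Bool → ZMod 2) → α) :
    ∑ f, F f = ∑ g : W → ZMod 2, ∑ h : Bool → ZMod 2, F (Sum.elim g h) := by
  calc ∑ f, F f = ∑ p : (W → ZMod 2) × (Bool → ZMod 2), F (Sum.elim p.1 p.2) :=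
        (Fintype.sum_equiv (Equiv.sumArrowEquivProdArrow W Bool (ZMod 2)).symm
          (fun p => F (Sum.elim p.1 p.2)) F (fun p => rfl)).symm
    _ = ∑ g : W → ZMod 2, ∑ h : Bool → ZMod 2, F (Sum.elim g h) :=
        Fintype.sum_prod_type _

lemma Omega2.sum_bool_fun {α : Type*} [AddCommMonoid α] (F : (Bool → ZMod 2) → α) :
    ∑ h, F h = F (fun _ => 0) + (F (fun b => cond b 0 1)
      + (F (fun b => cond b 1 0) + F (fun _ => 1))) := by
  rw [show (Finset.univ : Finset (Bool → ZMod 2))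
      = {fun _ => 0, fun b => cond b 0 1, fun b => cond b 1 0, fun _ => 1} from by decide]
  rw [Finset.sum_insert (by decide), Finset.sum_insert (by decide),
    Finset.sum_insert (by decide), Finset.sum_singleton]

open Omega2 in
/-- Proposition 6: the reduced graph bracket (hence the graph Jones polynomial)
is invariant under `Ω.2` moves.  Here `G` (with matrix `MG`, on the vertices of
`H` together with two new vertices `v = Sum.inr true` and `w = Sum.inr false`)
is obtained from `H` (with matrix `MH`) by adjoining a looped vertex `v` and an
unlooped vertex `w` such that every old vertex adjacent to one of `v, w` is
adjacent to the other; `v` and `w` may or may not be adjacent. -/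
theorem reducedBracket_omega2 {W : Type*} [Fintype W] [DecidableEq W]
    (MH : Matrix W W (ZMod 2)) (hsymH : MH.IsSymm)
    (MG : Matrix (W ⊕ Bool) (W ⊕ Bool) (ZMod 2)) (hsymG : MG.IsSymm)
    (hrestrict : ∀ x y : W, MG (Sum.inl x) (Sum.inl y) = MH x y)
    (hv : MG (Sum.inr true) (Sum.inr true) = 1)
    (hw : MG (Sum.inr false) (Sum.inr false) = 0)
    (hnbr : ∀ x : W, MG (Sum.inl x) (Sum.inr true) = MG (Sum.inl x) (Sum.inr false)) :
    (∀ A : ℝ, A ≠ 0 → gBracketR MG A = gBracketR MH A) ∧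
    (∀ t : ℝ, 0 < t → jonesV MG t = jonesV MH t) := by
  classical
  set n := Fintype.card W with hn
  set c : W → ZMod 2 := fun x => MG (Sum.inl x) (Sum.inr false) with hc
  set e : ZMod 2 := MG (Sum.inr true) (Sum.inr false) with he
  have hblock : ∀ (g : W → ZMod 2) (h : Bool → ZMod 2),
      MG + Matrix.diagonal (Sum.elim g h)
        = fromBlocks (MH + Matrix.diagonal g) (Cc c) (Cr c)
            (Dm (1 + h true) e (h false)) := by
    intro g h
    ext i j
    rcases i with x | bi
    · rcases j with y | bj
      · simp [Matrix.add_apply, Matrix.diagonal_apply, hrestrict, fromBlocks]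
      · cases bj <;>
          simp [Matrix.add_apply, Matrix.diagonal_apply, fromBlocks, Cc, hnbr, hc]
    · rcases j with y | bj
      · cases bi <;>
          simp [Matrix.add_apply, Matrix.diagonal_apply, fromBlocks, Cr,
            hsymG.apply, hnbr, hc]
      · cases bi <;> cases bj <;>
          simp [Matrix.add_apply, Matrix.diagonal_apply, fromBlocks, Dm, Bm, hv, hw,
            hsymG.apply, he, add_comm]
  have hdiag : ∀ (g : W → ZMod 2) (h : Bool → ZMod 2),
      (Matrix.diagonal (Sum.elim g h) : Matrix (W ⊕ Bool) (W ⊕ Bool) (ZMod 2))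
        = fromBlocks (Matrix.diagonal g) 0 0 (Matrix.diagonal h) := by
    intro g h
    ext i j
    rcases i with x | bi <;> rcases j with y | bj <;>
      simp [Matrix.diagonal_apply, fromBlocks]
  have hcardG : Fintype.card (W ⊕ Bool) = n + 2 := by simp [hn]
  have hbr : ∀ A : ℝ, A ≠ 0 → gBracketR MG A = gBracketR MH A := by
    intro A hA
    unfold gBracketR gBracket
    simp only [← hn]
    rw [Omega2.sum_sum_elim]
    refine Finset.sum_congr rfl fun g _ => ?_
    rw [Omega2.sum_bool_fun]
    set N : Matrix W W (ZMod 2) := MH + Matrix.diagonal g with hN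
    have hρ : (Matrix.diagonal g).rank ≤ n := by
      simpa [hn] using (Matrix.diagonal g).rank_le_card_width
    have hrr : N.rank ≤ n := by simpa [hn] using N.rank_le_card_width
    have hss : (N + vecMulVec c c).rank ≤ n := by
      simpa [hn] using (N + vecMulVec c c).rank_le_card_width
    have hqq : qRank N c ≤ n + 1 := by
      have := (fromBlocks N (colc c) (rowc c) (cst 0)).rank_le_card_width
      simpa [qRank, hn] using this
    set ρ := (Matrix.diagonal g).rank with hρdef
    have hd00 : ((Matrix.diagonal (fun _ : Bool => (0 : ZMod 2)))).rank = 0 := by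
      simp
    have hd01 : ((Matrix.diagonal (fun b : Bool => cond b (0:ZMod 2) 1))).rank = 1 := by
      rw [Matrix.rank_diagonal]; decide
    have hd10 : ((Matrix.diagonal (fun b : Bool => cond b (1:ZMod 2) 0))).rank = 1 := by
      rw [Matrix.rank_diagonal]; decide
    have hd11 : ((Matrix.diagonal (fun _ : Bool => (1 : ZMod 2)))).rank = 2 := by
      rw [Matrix.rank_diagonal]; decide
    have hdrank : ∀ h : Bool → ZMod 2,
        (Matrix.diagonal (Sum.elim g h) : Matrix (W ⊕ Bool) (W ⊕ Bool) (ZMod 2)).rank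
          = ρ + (Matrix.diagonal h).rank := by
      intro h; rw [hdiag g h, rank_fromBlocks_zero]
    have honeone : (1 + 1 : ZMod 2) = 0 := by decide
    simp only [hdrank, hblock, hcardG, hd00, hd01, hd10, hd11, Bool.cond_true,
      Bool.cond_false, add_zero, honeone, Nat.add_zero]
    have hecases : e = 0 ∨ e = 1 := by
      have : ∀ x : ZMod 2, x = 0 ∨ x = 1 := by decide
      exact this e
    rcases hecases with he0 | he1
    · -- e = 0 branch
      rw [he0]
      rw [caseD100 N c, caseD101 N c, caseD000 N c, caseD001 N c]
      have E1 : n + 2 - ρ = (n - ρ) + 2 := by omega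
      have E2 : n + 2 - (ρ + 1) = (n - ρ) + 1 := by omega
      have E3 : n + 2 - (ρ + 2) = n - ρ := by omega
      have E4 : n + 2 - (qRank N c + 1) = (n + 1 - qRank N c) := by omega
      have E5 : n + 2 - qRank N c = (n + 1 - qRank N c) + 1 := by omega
      have E6 : n + 2 - (N.rank + 2) = n - N.rank := by omega
      rw [E1, E2, E3, E4, E5, E6]
      exact Omega2.sum4' A hA (n - ρ) ρ (n + 1 - qRank N c) (n - N.rank)
    · -- e = 1 branch
      rw [he1]
      rw [caseD110 N c, caseD111 N c, caseD010 N c, caseD011 N c]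
      have E1 : n + 2 - ρ = (n - ρ) + 2 := by omega
      have E2 : n + 2 - (ρ + 1) = (n - ρ) + 1 := by omega
      have E3 : n + 2 - (ρ + 2) = n - ρ := by omega
      have E4 : n + 2 - ((N + vecMulVec c c).rank + 2) = n - (N + vecMulVec c c).rank := by
        omega
      have E5 : n + 2 - ((N + vecMulVec c c).rank + 1)
          = (n - (N + vecMulVec c c).rank) + 1 := by omega
      have E6 : n + 2 - (N.rank + 2) = n - N.rank := by omega
      rw [E1, E2, E3, E4, E5, E6]
      exact Omega2.sum4 A hA (n - ρ) ρ (n - (N + vecMulVec c c).rank) (n - N.rank)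
  refine ⟨hbr, fun t ht => ?_⟩
  have hA : (t ^ (-(1/4) : ℝ)) ≠ 0 := ne_of_gt (Real.rpow_pos_of_pos ht _)
  have hloop : Fintype.card {i : W ⊕ Bool // MG i i = 1}
      = Fintype.card {x : W // MH x x = 1} + 1 := by
    rw [Fintype.card_congr (Equiv.subtypeSum (p := fun i : W ⊕ Bool => MG i i = 1)),
      Fintype.card_sum]
    congr 1
    · exact Fintype.card_congr (Equiv.subtypeEquivRight (fun x => by rw [hrestrict]))
    · rw [Fintype.card_congr (Equiv.subtypeEquivRight (q := fun b => b = true)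
        (fun b => by cases b <;> simp [hv, hw]))]
      exact Fintype.card_subtype_eq true
  unfold jonesV
  rw [hbr _ hA, hcardG, hloop]
  have h1 : ((-1 : ℝ)) ^ (n + 2) = (-1 : ℝ) ^ (Fintype.card W) := by
    rw [pow_add, hn]; norm_num
  have h2 : (3 * ((n + 2 : ℕ) : ℝ)
        - 6 * ((Fintype.card {x : W // MH x x = 1} + 1 : ℕ) : ℝ)) / 4
      = (3 * ((Fintype.card W : ℕ) : ℝ)
        - 6 * ((Fintype.card {x : W // MH x x = 1} : ℕ) : ℝ)) / 4 := by
    push_cast [hn]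
    ring
  rw [h1, h2]
end

section
/- Let M be a symmetric n×n matrix over GF(2) (n ≥ 2) and let a ≠ b be indices with M_{aa} = 0, M_{bb} = 0 and M_{ab} = 1. Let M′ be the (n−2)×(n−2) matrix indexed by the indices x, y distinct from a and b whose (x,y) entry is M_{xy} + M_{xa}·M_{yb} + M_{xb}·M_{ya}. Then rank(M) = rank(M′) + 2; equivalently, M and M′ have the same nullity over GF(2). -/
open Matrix BigOperators

lemma finrank_submodule_prod {K M M₂ : Type*} [Field K] [AddCommGroup M] [Module K M]
    [AddCommGroup M₂] [Module K M₂] [FiniteDimensional K M] [FiniteDimensional K M₂]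
    (p : Submodule K M) (q : Submodule K M₂) :
    Module.finrank K (p.prod q) = Module.finrank K p + Module.finrank K q := by
  rw [← Module.finrank_prod]
  exact LinearEquiv.finrank_eq {
    toFun := fun x => (⟨x.1.1, x.2.1⟩, ⟨x.1.2, x.2.2⟩)
    invFun := fun x => ⟨(x.1.1, x.2.1), x.1.2, x.2.2⟩
    map_add' := fun _ _ => rfl
    map_smul' := fun _ _ => rfl
    left_inv := fun _ => rfl
    right_inv := fun _ => rfl }

lemma range_prodMap' {K M M₂ N N₂ : Type*} [Field K] [AddCommGroup M] [Module K M]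
    [AddCommGroup M₂] [Module K M₂] [AddCommGroup N] [Module K N] [AddCommGroup N₂] [Module K N₂]
    (f : M →ₗ[K] N) (g : M₂ →ₗ[K] N₂) :
    LinearMap.range (f.prodMap g) = (LinearMap.range f).prod (LinearMap.range g) := by
  ext ⟨x, y⟩
  simp only [LinearMap.mem_range, Submodule.mem_prod]
  constructor
  · rintro ⟨⟨u, v⟩, h⟩
    exact ⟨⟨u, congrArg Prod.fst h⟩, ⟨v, congrArg Prod.snd h⟩⟩
  · rintro ⟨⟨u, hu⟩, ⟨v, hv⟩⟩
    exact ⟨(u, v), Prod.ext hu hv⟩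

lemma rank_fromBlocks_diag {K m n : Type*} [Field K] [Fintype m] [Fintype n]
    [DecidableEq m] [DecidableEq n] (A : Matrix m m K) (D : Matrix n n K) :
    (fromBlocks A 0 0 D).rank = A.rank + D.rank := by
  classical
  set e : ((m ⊕ n) → K) ≃ₗ[K] (m → K) × (n → K) :=
    LinearEquiv.sumArrowLequivProdArrow m n K K with he
  have h : (fromBlocks A 0 0 D).mulVecLin
      = e.symm.toLinearMap ∘ₗ (A.mulVecLin.prodMap D.mulVecLin) ∘ₗ e.toLinearMap := by
    apply LinearMap.ext; intro v
    funext i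
    cases i with
    | inl i =>
      simp [he, mulVec, dotProduct, Fintype.sum_sum_type, fromBlocks,
        LinearEquiv.sumArrowLequivProdArrow]
    | inr i =>
      simp [he, mulVec, dotProduct, Fintype.sum_sum_type, fromBlocks,
        LinearEquiv.sumArrowLequivProdArrow]
  rw [Matrix.rank, h, ← LinearMap.comp_assoc]
  rw [LinearMap.range_comp_of_range_eq_top _ e.range]
  rw [LinearMap.range_comp, LinearEquiv.finrank_map_eq, range_prodMap', finrank_submodule_prod]
  rfl

/-- If `M` is symmetric over `GF(2)` with `M a a = M b b = 0` and `M a b = 1`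
(`a ≠ b`), and `M'` is the pivot minor with entries
`M x y + M x a · M y b + M x b · M y a` (for `x, y ∉ {a,b}`), then
`rank M = rank M' + 2`; equivalently `M` and `M'` have the same nullity. -/
theorem rank_pivot_minor {n : ℕ} (hn : 2 ≤ n)
    (M : Matrix (Fin n) (Fin n) (ZMod 2)) (hsym : M.IsSymm)
    (a b : Fin n) (hab : a ≠ b)
    (haa : M a a = 0) (hbb : M b b = 0) (hMab : M a b = 1) :
    M.rank =
        (Matrix.of fun x y : {z : Fin n // z ≠ a ∧ z ≠ b} =>
          M x.1 y.1 + M x.1 a * M y.1 b + M x.1 b * M y.1 a).rank + 2 ∧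
    n - M.rank =
      (n - 2) -
        (Matrix.of fun x y : {z : Fin n // z ≠ a ∧ z ≠ b} =>
          M x.1 y.1 + M x.1 a * M y.1 b + M x.1 b * M y.1 a).rank := by
  classical
  have hsym' : ∀ x y, M x y = M y x := fun x y => by
    conv_lhs => rw [← hsym]
    rfl
  set S := {z : Fin n // z ≠ a ∧ z ≠ b}
  set M' : Matrix S S (ZMod 2) :=
    Matrix.of fun x y : S => M x.1 y.1 + M x.1 a * M y.1 b + M x.1 b * M y.1 a with hM'
  -- the equivalence
  let f : Fin 2 ⊕ S → Fin n := Sum.elim ![a, b] Subtype.val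
  have hfbij : Function.Bijective f := by
    constructor
    · rintro (i | x) (j | y) h
      · fin_cases i <;> fin_cases j <;> simp_all [f] 
      · fin_cases i <;> simp [f] at h <;> [exact absurd h.symm y.2.1; exact absurd h.symm y.2.2]
      · fin_cases j <;> simp [f] at h <;> [exact absurd h x.2.1; exact absurd h x.2.2]
      · exact congrArg Sum.inr (Subtype.ext h)
    · intro z
      by_cases hza : z = a
      · exact ⟨Sum.inl 0, by simp [f, hza]⟩
      by_cases hzb : z = b
      · exact ⟨Sum.inl 1, by simp [f, hzb]⟩
      · exact ⟨Sum.inr ⟨z, hza, hzb⟩, rfl⟩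
  let e : (Fin 2 ⊕ S) ≃ Fin n := Equiv.ofBijective f hfbij
  -- block pieces
  set P : Matrix (Fin 2) (Fin 2) (ZMod 2) := !![0, 1; 1, 0] with hP
  set B : Matrix (Fin 2) S (ZMod 2) := Matrix.of fun i x => M (![a, b] i) x.1 with hB
  set C : Matrix S (Fin 2) (ZMod 2) := Matrix.of fun x i => M x.1 (![a, b] i) with hC
  set D : Matrix S S (ZMod 2) := Matrix.of fun x y => M x.1 y.1 with hD
  have hsub : M.submatrix e e = fromBlocks P B C D := by
    ext i j
    cases i with
    | inl i =>
      cases j with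
      | inl j =>
        fin_cases i <;> fin_cases j <;>
          simp [e, f, Equiv.ofBijective, P, haa, hbb, hMab, hsym' b a]
      | inr y => rfl
    | inr x =>
      cases j with
      | inl j => rfl
      | inr y => rfl
  have hba : M b a = 1 := (hsym' b a).trans hMab
  have hPP : P * P = 1 := by decide
  have : Invertible P := ⟨P, hPP, hPP⟩
  have hMrank : M.rank = (fromBlocks P B C D).rank := by
    rw [← hsub, rank_submatrix]
  have hdecomp := fromBlocks_eq_of_invertible₁₁ P B C D
  have hinvP : ⅟P = P := by
    apply invOf_eq_right_inv hPP
  have hrank2 : (fromBlocks P B C D).rank = (fromBlocks P 0 0 (D - C * ⅟P * B)).rank := by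
    rw [hdecomp]
    rw [rank_mul_eq_left_of_isUnit_det, rank_mul_eq_right_of_isUnit_det]
    · rw [det_fromBlocks_zero₁₂]; simp
    · rw [det_fromBlocks_zero₂₁]; simp
  have hSchur : D - C * ⅟P * B = M' := by
    rw [hinvP]
    ext x y
    have : ∀ u v : ZMod 2, u - v = u + v := by decide
    simp only [Matrix.sub_apply, this, hD, hM', Matrix.of_apply, mul_apply, Fin.sum_univ_two]
    simp [P, C, B, mul_apply, Fin.sum_univ_two, hsym' a y.1, hsym' b y.1]
    ring
  have hrankP : P.rank = 2 := by
    rw [Matrix.rank_of_isUnit P (isUnit_of_invertible P)]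
    simp
  have hrank : M.rank = M'.rank + 2 := by
    rw [hMrank, hrank2, hSchur, rank_fromBlocks_diag, hrankP, add_comm]
  have hcardS : Fintype.card S = n - 2 := by
    have := Fintype.card_congr e
    simp [Fintype.card_sum] at this
    omega
  have hle : M'.rank ≤ n - 2 := hcardS ▸ M'.rank_le_card_width
  exact ⟨hrank, by omega⟩
end

section
/- For every looped graph G on n vertices and every nonzero real number A, ⟨G⟩(−A) = (−1)^n·⟨G⟩(A). (Equivalently, the reduced graph bracket ⟨G⟩, as a Laurent polynomial in A, involves only powers A^k with k ≡ n (mod 2), so the graph Jones polynomial V_G(t) is a Laurent polynomial in t^{1/2}.) -/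
open Matrix BigOperators

/-- `⟨G⟩(-A) = (-1)^n ⟨G⟩(A)`: the reduced graph bracket involves only powers
`A^k` with `k ≡ n (mod 2)`, so `V_G(t)` is a Laurent polynomial in `t^{1/2}`. -/
theorem reducedBracket_neg {n : ℕ} (M : Matrix (Fin n) (Fin n) (ZMod 2))
    (hsym : M.IsSymm) (A : ℝ) (hA : A ≠ 0) :
    gBracketR M (-A) = (-1 : ℝ) ^ n * gBracketR M A := by
  unfold gBracketR gBracket
  rw [Finset.mul_sum]
  refine Finset.sum_congr rfl fun f _ => ?_
  have hr : (Matrix.diagonal f).rank ≤ n := by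
    simpa using Matrix.rank_le_card_width (Matrix.diagonal f)
  have hd : (-(-A) ^ 2 - (-A)⁻¹ ^ 2) = (-A ^ 2 - A⁻¹ ^ 2) := by
    rw [inv_neg]; ring
  rw [hd, inv_neg, neg_pow A, neg_pow (A⁻¹), Fintype.card_fin]
  have hsgn : ((-1 : ℝ)) ^ (n - (Matrix.diagonal f).rank) * (-1 : ℝ) ^ (Matrix.diagonal f).rank
      = (-1 : ℝ) ^ n := by
    rw [← pow_add, Nat.sub_add_cancel hr]
  calc (-1 : ℝ) ^ (n - (Matrix.diagonal f).rank) * A ^ (n - (Matrix.diagonal f).rank) *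
        ((-1 : ℝ) ^ (Matrix.diagonal f).rank * A⁻¹ ^ (Matrix.diagonal f).rank) *
        (-A ^ 2 - A⁻¹ ^ 2) ^ (n - (M + Matrix.diagonal f).rank)
      = ((-1 : ℝ) ^ (n - (Matrix.diagonal f).rank) * (-1 : ℝ) ^ (Matrix.diagonal f).rank) *
        (A ^ (n - (Matrix.diagonal f).rank) * A⁻¹ ^ (Matrix.diagonal f).rank *
        (-A ^ 2 - A⁻¹ ^ 2) ^ (n - (M + Matrix.diagonal f).rank)) := by ring
    _ = _ := by rw [hsgn]
end

section
/- Let G be a looped graph on vertex set V with Boolean adjacency matrix M, and let x, y be real numbers with x ≠ 1. Then ∑_{S ⊆ V} [G[S]](x−1, 0, (y−1)/(x−1)) = ∑_{S ⊆ V} (x−1)^{ρ(M[S])}·(y−1)^{ν(M[S])}, where for S ⊆ V, G[S] is the induced looped subgraph of G on S and M[S] is the corresponding principal submatrix of M; the right-hand side is the two-variable interlace polynomial q(G)(x,y) of Arratia, Bollobás and Sorkin. Thus q(G) is obtained from ∑_{S ⊆ V}[G[S]] by the evaluations A ↦ x−1, B ↦ 0, d ↦ (y−1)/(x−1). -/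
open Matrix BigOperators

lemma gBracket_eval {W : Type*} [Fintype W] [DecidableEq W] (N : Matrix W W (ZMod 2))
    (x y : ℝ) (hx : x ≠ 1) :
    gBracket N (x - 1) (0 : ℝ) ((y - 1) / (x - 1))
      = (x - 1) ^ N.rank * (y - 1) ^ (Fintype.card W - N.rank) := by
  have hx0 : x - 1 ≠ 0 := sub_ne_zero.mpr hx
  unfold gBracket
  rw [Fintype.sum_eq_single (0 : W → ZMod 2)]
  · have h0 : Matrix.diagonal (0 : W → ZMod 2) = 0 := Matrix.diagonal_zero
    simp only [h0, Matrix.rank_zero, pow_zero, mul_one, add_zero, Nat.sub_zero]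
    have hr : N.rank ≤ Fintype.card W := N.rank_le_card_width
    rw [div_pow]
    rw [mul_div_assoc', mul_comm ((x - 1) ^ Fintype.card W), mul_div_assoc, div_eq_mul_inv,
      ← pow_sub₀ _ hx0 (Nat.sub_le _ _), Nat.sub_sub_self hr, mul_comm]
  · intro f hf
    have : 0 < (Matrix.diagonal f).rank := by
      rw [Matrix.rank_diagonal]
      have : Nonempty {i // f i ≠ 0} := by
        obtain ⟨i, hi⟩ := Function.ne_iff.mp hf
        exact ⟨⟨i, hi⟩⟩
      exact Fintype.card_pos
    rw [zero_pow this.ne']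
    ring

/-- The two-variable interlace polynomial
`q(G) = ∑_{S ⊆ V} (x-1)^{ρ(M[S])} (y-1)^{ν(M[S])}` is obtained from
`∑_{S ⊆ V} [G[S]]` by the evaluations `A ↦ x-1`, `B ↦ 0`, `d ↦ (y-1)/(x-1)`. -/
theorem sum_bracket_induced_eq_interlace {V : Type*} [Fintype V] [DecidableEq V]
    (M : Matrix V V (ZMod 2)) (hsym : M.IsSymm) (x y : ℝ) (hx : x ≠ 1) :
    ∑ S : Finset V,
        gBracket (Matrix.of fun i j : {a : V // a ∈ S} => M i.1 j.1)
          (x - 1) (0 : ℝ) ((y - 1) / (x - 1))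
      = ∑ S : Finset V,
        (x - 1) ^ (Matrix.of fun i j : {a : V // a ∈ S} => M i.1 j.1).rank
          * (y - 1) ^ (S.card - (Matrix.of fun i j : {a : V // a ∈ S} => M i.1 j.1).rank) := by
  refine Finset.sum_congr rfl fun S _ => ?_
  rw [gBracket_eval _ x y hx, Fintype.card_coe]
end
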